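/- If ω is differentiable and positive and satisfies r·ω'(r) = -2ω(Aω-1)/(3Aω-1), then ((d/dr)(r ω^(1/2)))^2/(Aω) = A(2ω/(3Aω-1))^2. -/

import Mathlib

open Real Set

/-- If ω is differentiable and positive and satisfies
r·ω'(r) = -2ω(Aω-1)/(3Aω-1) (with A > 0 and 3Aω-1 ≠ 0), then
((d/dr)(r·√ω))²/(Aω) = A·(2ω/(3Aω-1))². -/
theorem stmt_8 (A a b r : ℝ) (ω : ℝ → ℝ) (hA : 0 < A) (ha : 0 < a)
    (hr : r ∈ Ioo a b)
    (hdiff : DifferentiableOn ℝ ω (Ioo a b))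
    (hpos : ∀ x ∈ Ioo a b, 0 < ω x)
    (h3 : 3 * A * ω r - 1 ≠ 0)
    (hode : r * deriv ω r = -2 * ω r * (A * ω r - 1) / (3 * A * ω r - 1)) :
    (deriv (fun x => x * Real.sqrt (ω x)) r) ^ 2 / (A * ω r)
      = A * (2 * ω r / (3 * A * ω r - 1)) ^ 2 := by
  have hωr : 0 < ω r := hpos r hr
  have hd : DifferentiableAt ℝ ω r :=
    (hdiff.differentiableAt (isOpen_Ioo.mem_nhds hr))
  have hds : HasDerivAt ω (deriv ω r) r := hd.hasDerivAt
  have hsq : HasDerivAt (fun x => Real.sqrt (ω x)) (deriv ω r / (2 * Real.sqrt (ω r))) r :=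
    hds.sqrt hωr.ne'
  have hmul : HasDerivAt (fun x => x * Real.sqrt (ω x))
      (1 * Real.sqrt (ω r) + r * (deriv ω r / (2 * Real.sqrt (ω r)))) r :=
    (hasDerivAt_id r).mul hsq
  rw [hmul.deriv]
  set s := Real.sqrt (ω r) with hs
  have hs2 : s ^ 2 = ω r := Real.sq_sqrt hωr.le
  have hsne : s ≠ 0 := (Real.sqrt_pos.mpr hωr).ne'
  have hAne : A ≠ 0 := hA.ne'
  have key : r * deriv ω r * (3 * A * ω r - 1) = -2 * ω r * (A * ω r - 1) := by
    rw [hode, div_mul_cancel₀ _ h3]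
  rw [← hs2] at key h3 ⊢
  have hD : 1 * s + r * (deriv ω r / (2 * s)) = 2 * A * s ^ 3 / (3 * A * s ^ 2 - 1) := by
    rw [eq_div_iff h3]
    field_simp
    linear_combination key
  rw [hD]
  field_simp
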